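/- For all rational numbers α, β with 0 ≤ α < β, there exist x, y ∈ N_{p/q} such that α < x − y < β. -/

import Mathlib

/-- Base-p/q evaluation of a word over the digit alphabet, given as a list of
digits with the least-significant digit first:
`pqVal p q [a0, a1, ..., ak] = Σ (a_i / q) * (p/q)^i`. -/
def pqVal (p q : ℕ) : List ℕ → ℚ
  | [] => 0
  | a :: u => (a : ℚ) / q + ((p : ℚ) / q) * pqVal p q u

/-- `N_{p/q}`: the set of values of words over `A_p = {0, ..., p-1}`. -/
def pqSet (p q : ℕ) : Set ℚ :=
  {x | ∃ u : List ℕ, (∀ a ∈ u, a < p) ∧ pqVal p q u = x}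


lemma lem1 (p q : ℕ) (hq : 1 < q) (hpq : q < p) :
    ∀ n : ℕ, ∃ u w : List ℕ, (∀ a ∈ u, a < p) ∧ (∀ a ∈ w, a < p) ∧
      pqVal p q u - pqVal p q w = (n : ℚ) / q := by
  intro n
  induction n using Nat.strong_induction_on with
  | _ n ih =>
    have hq0 : (q : ℚ) ≠ 0 := by positivity
    by_cases h : n < p
    · exact ⟨[n], [], by simpa using h, by simp, by simp [pqVal]⟩
    · push_neg at h
      have hp0 : 0 < p := by omega
      have ht1 : 1 ≤ n / p := (Nat.one_le_div_iff hp0).mpr h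
      have hlt : q * (n / p) < n := by
        have h1 : q * (n / p) < p * (n / p) := by
          exact Nat.mul_lt_mul_of_lt_of_le hpq le_rfl (by omega)
        have h2 : p * (n / p) ≤ n := Nat.mul_div_le n p |>.trans_eq (by ring_nf)
        omega
      obtain ⟨u, w, hu, hw, heq⟩ := ih (q * (n / p)) hlt
      refine ⟨(n % p) :: u, 0 :: w, ?_, ?_, ?_⟩
      · intro a ha
        rcases List.mem_cons.mp ha with rfl | ha
        · exact Nat.mod_lt _ hp0
        · exact hu a ha
      · intro a ha
        rcases List.mem_cons.mp ha with rfl | ha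
        · exact hp0
        · exact hw a ha
      · have key : pqVal p q ((n % p) :: u) - pqVal p q (0 :: w)
            = ((n % p : ℕ) : ℚ)/q + ((p:ℚ)/q) * (pqVal p q u - pqVal p q w) := by
          simp [pqVal]; ring
        rw [key, heq]
        have hnd : ((n % p : ℕ) : ℚ) + (p : ℚ) * ((n / p : ℕ) : ℚ) = (n : ℚ) := by
          exact_mod_cast Nat.mod_add_div n p
        push_cast
        field_simp
        linear_combination hnd

lemma lem1' (p q : ℕ) (hq : 1 < q) (hpq : q < p) :
    ∀ c : ℤ, ∃ u w : List ℕ, (∀ a ∈ u, a < p) ∧ (∀ a ∈ w, a < p) ∧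
      pqVal p q u - pqVal p q w = (c : ℚ) / q := by
  intro c
  rcases le_or_gt 0 c with hc | hc
  · obtain ⟨u, w, hu, hw, heq⟩ := lem1 p q hq hpq c.toNat
    refine ⟨u, w, hu, hw, ?_⟩
    rw [heq]
    congr 1
    exact_mod_cast congrArg (fun z : ℤ => (z : ℚ)) (Int.toNat_of_nonneg hc)
  · obtain ⟨u, w, hu, hw, heq⟩ := lem1 p q hq hpq (-c).toNat
    refine ⟨w, u, hw, hu, ?_⟩
    have : ((-c).toNat : ℚ) = ((-c : ℤ) : ℚ) := by
      exact_mod_cast congrArg (fun z : ℤ => (z : ℚ)) (Int.toNat_of_nonneg (by omega))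
    rw [this] at heq
    push_cast at heq ⊢
    linear_combination -heq

lemma lemB (p q : ℕ) (hq : 1 < q) (hpq : q < p) (hcop : Nat.Coprime p q) :
    ∀ k : ℕ, ∀ c : ℤ, ∃ u w : List ℕ, (∀ a ∈ u, a < p) ∧ (∀ a ∈ w, a < p) ∧
      pqVal p q u - pqVal p q w = (c : ℚ) / q ^ (k + 1) := by
  intro k
  induction k with
  | zero => intro c; simpa using lem1' p q hq hpq c
  | succ k ih =>
    intro c
    have hp0 : (0 : ℤ) < p := by exact_mod_cast (by omega : 0 < p)
    have hco : IsCoprime ((q : ℤ) ^ (k + 1)) (p : ℤ) := by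
      apply IsCoprime.pow_left
      rw [Int.isCoprime_iff_gcd_eq_one]
      simpa [Nat.coprime_comm] using hcop
    obtain ⟨s, t, hst⟩ := hco
    set d : ℤ := (c * s) % p with hd
    have hd0 : 0 ≤ d := Int.emod_nonneg _ (by omega)
    have hdp : d < p := Int.emod_lt_of_pos _ hp0
    have hdvd : (p : ℤ) ∣ c - d * (q : ℤ) ^ (k + 1) := by
      have h1 : (p : ℤ) ∣ c * s - d := Int.dvd_self_sub_of_emod_eq rfl
      have h2 : c - d * (q : ℤ) ^ (k + 1)
          = c * t * p + (c * s - d) * (q : ℤ) ^ (k + 1) := by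
        linear_combination (-c) * hst
      rw [h2]
      exact dvd_add ⟨c * t, by ring⟩ (Dvd.dvd.mul_right h1 _)
    set c' : ℤ := (c - d * (q : ℤ) ^ (k + 1)) / p with hc'
    have hpc : (p : ℤ) * c' = c - d * (q : ℤ) ^ (k + 1) :=
      Int.mul_ediv_cancel' hdvd
    obtain ⟨u, w, hu, hw, heq⟩ := ih c'
    refine ⟨d.toNat :: u, 0 :: w, ?_, ?_, ?_⟩
    · intro a ha
      rcases List.mem_cons.mp ha with rfl | ha
      · omega
      · exact hu a ha
    · intro a ha
      rcases List.mem_cons.mp ha with rfl | ha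
      · omega
      · exact hw a ha
    · have hq0 : (q : ℚ) ≠ 0 := by positivity
      have key : pqVal p q (d.toNat :: u) - pqVal p q (0 :: w)
          = ((d.toNat : ℕ) : ℚ)/q + ((p:ℚ)/q) * (pqVal p q u - pqVal p q w) := by
        simp [pqVal]; ring
      rw [key, heq]
      have hdq : ((d.toNat : ℕ) : ℚ) = (d : ℚ) := by
        exact_mod_cast congrArg (fun z : ℤ => (z : ℚ)) (Int.toNat_of_nonneg hd0)
      have hpcQ : (p : ℚ) * (c' : ℚ) = (c : ℚ) - (d : ℚ) * (q : ℚ) ^ (k + 1) := by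
        exact_mod_cast congrArg (fun z : ℤ => (z : ℚ)) hpc
      rw [hdq]
      field_simp
      ring_nf
      ring_nf at hpcQ
      linear_combination (q : ℚ) ^ (k + 2) * hpcQ


/-- for all rationals 0 ≤ α < β there are x, y ∈ N_{p/q} with
α < x − y < β. -/
theorem stmt_10 (p q : ℕ) (hq : 1 < q) (hpq : q < p) (hcop : Nat.Coprime p q)
    (α β : ℚ) (hα : 0 ≤ α) (hαβ : α < β) :
    ∃ x ∈ pqSet p q, ∃ y ∈ pqSet p q, α < x - y ∧ x - y < β := by
  have hq1 : (1 : ℚ) < q := by exact_mod_cast hq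
  have hq0 : (0 : ℚ) < q := by linarith
  obtain ⟨k, hk⟩ := pow_unbounded_of_one_lt (1 / (β - α) : ℚ) hq1
  have hβα : 0 < β - α := by linarith
  have hK : (1 : ℚ) / (β - α) < (q : ℚ) ^ (k + 1) :=
    hk.trans_le (pow_le_pow_right₀ hq1.le (Nat.le_succ k))
  have hQK : (0 : ℚ) < (q : ℚ) ^ (k + 1) := by positivity
  have hone : 1 < (β - α) * (q : ℚ) ^ (k + 1) := by
    rw [div_lt_iff₀ hβα] at hK
    linarith [hK]
  set n : ℤ := ⌊α * (q : ℚ) ^ (k + 1)⌋ + 1 with hn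
  have h1 : α < (n : ℚ) / (q : ℚ) ^ (k + 1) := by
    rw [lt_div_iff₀ hQK]
    have := Int.lt_floor_add_one (α * (q : ℚ) ^ (k + 1))
    rw [hn]
    push_cast
    linarith
  have h2 : (n : ℚ) / (q : ℚ) ^ (k + 1) < β := by
    rw [div_lt_iff₀ hQK]
    have := Int.floor_le (α * (q : ℚ) ^ (k + 1))
    rw [hn]
    push_cast
    linarith
  obtain ⟨u, w, hu, hw, heq⟩ := lemB p q hq hpq hcop k n
  exact ⟨pqVal p q u, ⟨u, hu, rfl⟩, pqVal p q w, ⟨w, hw, rfl⟩, by rw [heq]; exact h1, by rw [heq]; exact h2⟩
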